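/- For every countable dense subset {X_i : i ∈ ℕ} of T and every countable basis {U_i : i ∈ ℕ} of the topology of M, the family {O(X_i, q) : i ∈ ℕ, q ∈ ℚ, q > 0} ∪ {ι(U_i) : i ∈ ℕ} is a countable basis for the topology of N; in particular N is second countable. -/
import Mathlib


open Topology Filter

/-- Abstract second-countability lemma: if `ι : M → N` is a dense open embedding of a
second-countable space, `(T,d)` is a separable metric space, and `O : T → ℝ → Set N` assigns
open "thickenings" satisfying monotonicity under inclusion of metric balls and furnishing
neighbourhood bases at the points of `N \ ι(M)`, then for any countable dense subset
`{X i}` of `T` and any countable basis `{U i}` of `M`, the family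
`{O (X i) q : q ∈ ℚ, q > 0} ∪ {ι(U i)}` is a countable basis of `N`; in particular `N` is
second countable. -/
theorem isTopologicalBasis_thickenings
    {M : Type*} [TopologicalSpace M] [SecondCountableTopology M]
    {N : Type*} [TopologicalSpace N]
    (ι : M → N) (hι : IsOpenEmbedding ι) (hdense : DenseRange ι)
    {T : Type*} [MetricSpace T] [TopologicalSpace.SeparableSpace T]
    (O : T → ℝ → Set N)
    (hOopen : ∀ (X : T) (r : ℝ), 0 < r → IsOpen (O X r))
    (hOmono : ∀ (X Y : T) (r s : ℝ), 0 < r → 0 < s →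
      Metric.ball X r ⊆ Metric.ball Y s → O X r ⊆ O Y s)
    (hbdry : ∀ p : N, p ∉ Set.range ι →
      ∃ Xs : ℕ → T, (∀ (n : ℕ) (r : ℝ), 0 < r → p ∈ O (Xs n) r) ∧
        (𝓝 p).HasBasis (fun nm : ℕ × ℕ => 1 ≤ nm.2)
          (fun nm => O (Xs nm.1) (1 / (nm.2 : ℝ)))) :
    ∀ X : ℕ → T, DenseRange X →
      ∀ U : ℕ → Set M, TopologicalSpace.IsTopologicalBasis (Set.range U) →
        TopologicalSpace.IsTopologicalBasis
            ({S : Set N | ∃ (i : ℕ) (q : ℚ), 0 < q ∧ S = O (X i) (q : ℝ)} ∪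
              {S : Set N | ∃ i : ℕ, S = ι '' (U i)}) ∧
          SecondCountableTopology N := by
  intro X hX U hU
  have hbasis : TopologicalSpace.IsTopologicalBasis
      ({S : Set N | ∃ (i : ℕ) (q : ℚ), 0 < q ∧ S = O (X i) (q : ℝ)} ∪
        {S : Set N | ∃ i : ℕ, S = ι '' (U i)}) := by
    apply TopologicalSpace.isTopologicalBasis_of_isOpen_of_nhds
    · rintro S (⟨i, q, hq, rfl⟩ | ⟨i, rfl⟩)
      · exact hOopen _ _ (by exact_mod_cast hq)
      · exact hι.isOpenMap _ (hU.isOpen ⟨i, rfl⟩)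
    · intro p V hp hV
      by_cases hpι : p ∈ Set.range ι
      · obtain ⟨m, rfl⟩ := hpι
        have hm : m ∈ ι ⁻¹' V := hp
        obtain ⟨W, ⟨i, rfl⟩, hmW, hWV⟩ :=
          hU.exists_subset_of_mem_open hm (hV.preimage hι.continuous)
        refine ⟨ι '' (U i), Or.inr ⟨i, rfl⟩, ⟨m, hmW, rfl⟩, ?_⟩
        rintro _ ⟨x, hx, rfl⟩
        exact hWV hx
      · obtain ⟨Xs, hmem, hB⟩ := hbdry p hpι
        obtain ⟨⟨n, m⟩, hm, hsub⟩ := hB.mem_iff.1 (hV.mem_nhds hp)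
        have hm' : (0 : ℝ) < 1 / (m : ℝ) := by
          have : (1 : ℝ) ≤ (m : ℝ) := by exact_mod_cast hm
          positivity
        obtain ⟨i, hi⟩ := hX.exists_dist_lt (Xs n) (by linarith : (0:ℝ) < (1 / (m:ℝ)) / 3)
        set d : ℝ := dist (Xs n) (X i) with hd
        have hd0 : 0 ≤ d := dist_nonneg
        obtain ⟨q, hq1, hq2⟩ := exists_rat_btwn (by linarith : d < 1 / (m : ℝ) - d)
        have hq0 : (0 : ℝ) < q := lt_of_le_of_lt hd0 hq1
        have hr0 : (0 : ℝ) < (q : ℝ) - d := by linarith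
        have hball1 : Metric.ball (Xs n) ((q : ℝ) - d) ⊆ Metric.ball (X i) (q : ℝ) :=
          Metric.ball_subset_ball' (by rw [← hd]; linarith)
        have hball2 : Metric.ball (X i) (q : ℝ) ⊆ Metric.ball (Xs n) (1 / (m : ℝ)) :=
          Metric.ball_subset_ball' (by rw [dist_comm, ← hd]; linarith)
        refine ⟨O (X i) (q : ℝ), Or.inl ⟨i, q, by exact_mod_cast hq0, rfl⟩, ?_, ?_⟩
        · exact hOmono _ _ _ _ hr0 hq0 hball1 (hmem n _ hr0)
        · exact (hOmono _ _ _ _ hq0 hm' hball2).trans hsub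
  refine ⟨hbasis, hbasis.secondCountableTopology ?_⟩
  apply Set.Countable.union
  · have : {S : Set N | ∃ (i : ℕ) (q : ℚ), 0 < q ∧ S = O (X i) (q : ℝ)} ⊆
        Set.range (fun p : ℕ × ℚ => O (X p.1) (p.2 : ℝ)) := by
      rintro S ⟨i, q, _, rfl⟩
      exact ⟨(i, q), rfl⟩
    exact (Set.countable_range _).mono this
  · have : {S : Set N | ∃ i : ℕ, S = ι '' (U i)} = Set.range (fun i => ι '' (U i)) := by
      ext S; simp [eq_comm]
    rw [this]
    exact Set.countable_range _
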